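/- arXiv:1909.02810 — 5 statements merged into one kernel-verified Lean document; each statement's English description precedes it below -/
import Mathlib

section
/- The grounded extension of an abstract argumentation framework is conflict-free: if E is the least fixpoint of the characteristic function F (where F(S) is the set of arguments defended by S), then no argument in E attacks an argument in E. -/
/-- An argument `a` is defended by `S`: every attacker of `a` is attacked by some member of `S`. -/
def defends {A : Type*} (att : A → A → Prop) (S : Set A) (a : A) : Prop :=
  ∀ b, att b a → ∃ c ∈ S, att c b

/-- The characteristic function `F`. -/
def Fop {A : Type*} (att : A → A → Prop) (S : Set A) : Set A := {a | defends att S a}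

/-- A set of arguments is conflict-free. -/
def conflictFree {A : Type*} (att : A → A → Prop) (S : Set A) : Prop :=
  ∀ a ∈ S, ∀ b ∈ S, ¬ att a b

/-- A set of arguments is admissible. -/
def admissible {A : Type*} (att : A → A → Prop) (S : Set A) : Prop :=
  conflictFree att S ∧ ∀ a ∈ S, defends att S a

lemma Fop_mono {A : Type*} (att : A → A → Prop) : Monotone (Fop att) := by
  intro S T hST a ha b hb
  obtain ⟨c, hc, hcb⟩ := ha b hb
  exact ⟨c, hST hc, hcb⟩

/-- The grounded extension (least fixpoint of `F`) is conflict-free. -/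
theorem grounded_conflictFree {A : Type*} (att : A → A → Prop) (E : Set A)
    (hfix : Fop att E = E) (hleast : ∀ S, Fop att S = S → E ⊆ S) :
    ∀ a ∈ E, ∀ b ∈ E, ¬ att a b := by
  set f : Set A →o Set A := ⟨Fop att, Fop_mono att⟩ with hf
  -- E equals the Knaster–Tarski least fixpoint, hence is below every prefixpoint
  have hE_lfp : E = OrderHom.lfp f := by
    apply le_antisymm
    · exact hleast _ (f.map_lfp)
    · exact OrderHom.lfp_le f (le_of_eq hfix)
  have hpre : ∀ S : Set A, Fop att S ⊆ S → E ⊆ S := by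
    intro S hS
    rw [hE_lfp]
    exact OrderHom.lfp_le f hS
  -- the prefixpoint of conflict-free members of E
  set S : Set A := {a | a ∈ E ∧ ∀ b ∈ E, ¬ att a b ∧ ¬ att b a} with hSdef
  have hSE : S ⊆ E := fun a ha => ha.1
  have hpreS : Fop att S ⊆ S := by
    intro a ha
    have haE : a ∈ E := by
      rw [← hfix]
      exact Fop_mono att hSE ha
    refine ⟨haE, fun b hbE => ⟨?_, ?_⟩⟩
    · intro hab
      -- b ∈ E = Fop att E, so b is defended by E; a attacks b, so some c ∈ E attacks a
      have hb' : defends att E b := by rw [← hfix] at hbE; exact hbE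
      obtain ⟨c, hcE, hca⟩ := hb' a hab
      -- a ∈ Fop att S, so some d ∈ S attacks c; but d ∈ S and c ∈ E contradict
      obtain ⟨d, hdS, hdc⟩ := ha c hca
      exact (hdS.2 c hcE).1 hdc
    · intro hba
      obtain ⟨c, hcS, hcb⟩ := ha b hba
      exact (hcS.2 b hbE).1 hcb
  have hES : E ⊆ S := hpre S hpreS
  intro a haE b hbE hab
  exact ((hES haE).2 b hbE).1 hab
end

section
/- The grounded extension of an abstract argumentation framework is admissible: it is conflict-free and every element of the grounded extension is defended by the grounded extension. -/
lemma Fop_mono_s1 {A : Type*} (att : A → A → Prop) {S T : Set A} (h : S ⊆ T) :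
    Fop att S ⊆ Fop att T := by
  intro a ha b hb
  obtain ⟨c, hcS, hcb⟩ := ha b hb
  exact ⟨c, h hcS, hcb⟩

/-- Least fixpoint is below every prefixpoint. -/
lemma least_pre {A : Type*} (att : A → A → Prop) (E : Set A)
    (hfix : Fop att E = E) (hleast : ∀ S, Fop att S = S → E ⊆ S)
    {S : Set A} (hS : Fop att S ⊆ S) : E ⊆ S := by
  set L : Set A := ⋂₀ {T | Fop att T ⊆ T} with hL
  have hpre : Fop att L ⊆ L := by
    intro a ha
    intro T hT
    exact hT (Fop_mono_s1 att (Set.sInter_subset_of_mem hT) ha)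
  have hpost : L ⊆ Fop att L :=
    Set.sInter_subset_of_mem (Fop_mono_s1 att hpre)
  have hfixL : Fop att L = L := le_antisymm hpre hpost
  exact (hleast L hfixL).trans (Set.sInter_subset_of_mem hS)

/-- The grounded extension (least fixpoint of `F`) is admissible. -/
theorem grounded_admissible {A : Type*} (att : A → A → Prop) (E : Set A)
    (hfix : Fop att E = E) (hleast : ∀ S, Fop att S = S → E ⊆ S) :
    admissible att E := by
  have hdef : ∀ a ∈ E, defends att E a := by
    intro a ha
    rw [← hfix] at ha
    exact ha
  -- S : elements of E not attacked by any element of E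
  set S : Set A := {a | a ∈ E ∧ ∀ b ∈ E, ¬ att b a} with hSdef
  have hSsub : S ⊆ E := fun a ha => ha.1
  have hSpre : Fop att S ⊆ S := by
    intro a ha
    have haE : a ∈ E := by
      rw [← hfix]
      exact Fop_mono_s1 att hSsub ha
    refine ⟨haE, ?_⟩
    intro b hbE hba
    obtain ⟨c, hcS, hcb⟩ := ha b hba
    obtain ⟨d, hdE, hdc⟩ := hdef b hbE c hcb
    exact hcS.2 d hdE hdc
  have hES : E ⊆ S := least_pre att E hfix hleast hSpre
  refine ⟨?_, hdef⟩
  intro a haE b hbE hab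
  exact (hES hbE).2 a haE hab
end

section
/- If attack in ASPIC+ is dlp-rebut, the knowledge base K is indirectly consistent, and the argument ordering is the simple ordering (A ⪯ B iff A is defeasible and B is strict), then the grounded extension E of the corresponding abstract argumentation framework is directly consistent: there is no formula φ such that both φ and its negation are conclusions of arguments in E. -/
/-- Literals: atoms with a sign; `(a, true)` is the positive literal. -/
abbrev Lit (α : Type) := α × Bool

/-- Symmetric negation on literals. -/
def neg {α : Type} (l : Lit α) : Lit α := (l.1, !l.2)

/-- An inference rule with a list of antecedents and a consequent. -/
structure Rule (α : Type) where
  ant : List (Lit α)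
  cons : Lit α

/-- Closure of a set `S` of literals under a set `R` of rules:
`Cl R S l` holds iff `l` is derivable from `S` by chaining rules of `R`. -/
inductive Cl {α : Type} (R : Set (Rule α)) (S : Set (Lit α)) : Lit α → Prop
  | base {l : Lit α} : l ∈ S → Cl R S l
  | step {r : Rule α} : r ∈ R → (∀ a ∈ r.ant, Cl R S a) → Cl R S r.cons

/-- An ASPIC+ argumentation system plus knowledge base: knowledge base `K`,
strict rules `Rs` and defeasible rules `Rd`. -/
structure Theory (α : Type) where
  K : Set (Lit α)
  Rs : Set (Rule α)
  Rd : Set (Rule α)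

/-- Untyped argument trees: a premise, or a rule applied to subargument trees. -/
inductive Arg (α : Type) where
  | prem : Lit α → Arg α
  | node : Rule α → List (Arg α) → Arg α

/-- The conclusion of an argument. -/
def Arg.conc {α : Type} : Arg α → Lit α
  | .prem l => l
  | .node r _ => r.cons

/-- Well-formed ASPIC+ arguments over a theory: premises come from `K`, and
each applied rule is a strict or defeasible rule whose antecedents are the
conclusions of the immediate subarguments. -/
inductive WF {α : Type} (T : Theory α) : Arg α → Prop
  | prem {l : Lit α} : l ∈ T.K → WF T (.prem l)
  | node {r : Rule α} {args : List (Arg α)} :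
      (r ∈ T.Rs ∨ r ∈ T.Rd) → args.map Arg.conc = r.ant →
      (∀ a ∈ args, WF T a) → WF T (.node r args)

/-- `SubArg B A`: `B` is a subargument of `A`. -/
inductive SubArg {α : Type} : Arg α → Arg α → Prop
  | refl (A : Arg α) : SubArg A A
  | child {B A : Arg α} {r : Rule α} {args : List (Arg α)} :
      A ∈ args → SubArg B A → SubArg B (.node r args)

/-- `RuleIn r A`: rule `r` is used somewhere in argument `A`. -/
inductive RuleIn {α : Type} : Rule α → Arg α → Prop
  | top {r : Rule α} {args : List (Arg α)} : RuleIn r (.node r args)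
  | child {r' : Rule α} {A : Arg α} {r : Rule α} {args : List (Arg α)} :
      A ∈ args → RuleIn r' A → RuleIn r' (.node r args)

/-- `PremIn l A`: literal `l` is used as a premise of argument `A`. -/
inductive PremIn {α : Type} : Lit α → Arg α → Prop
  | prem {l : Lit α} : PremIn l (.prem l)
  | child {l : Lit α} {A : Arg α} {r : Rule α} {args : List (Arg α)} :
      A ∈ args → PremIn l A → PremIn l (.node r args)

/-- The set of defeasible rules used in an argument. -/
def DefRules {α : Type} (T : Theory α) (A : Arg α) : Set (Rule α) :=
  {r | RuleIn r A ∧ r ∈ T.Rd}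

/-- An argument is defeasible if it uses some defeasible rule; otherwise strict. -/
def Defeasible {α : Type} (T : Theory α) (A : Arg α) : Prop :=
  ∃ r, RuleIn r A ∧ r ∈ T.Rd

/-- The set of conclusions of all subarguments of `A`. -/
def ConcSub {α : Type} (A : Arg α) : Set (Lit α) :=
  {l | ∃ B, SubArg B A ∧ B.conc = l}

/-- A set of literals is indirectly consistent (relative to the strict rules of `T`). -/
def IndCons {α : Type} (T : Theory α) (S : Set (Lit α)) : Prop :=
  ¬ ∃ l, Cl T.Rs S l ∧ Cl T.Rs S (neg l)

/-- ASPIC+ (restricted) rebut: `A` rebuts `B` on a subargument with a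
defeasible top rule whose consequent is the negation of `A`'s conclusion. -/
def rebuts {α : Type} (T : Theory α) (A B : Arg α) : Prop :=
  ∃ (r : Rule α) (args : List (Arg α)),
    SubArg (.node r args) B ∧ r ∈ T.Rd ∧ A.conc = neg r.cons

/-- Unrestricted rebut: `A` u-rebuts `B` on a defeasible subargument. -/
def uRebuts {α : Type} (T : Theory α) (A B : Arg α) : Prop :=
  ∃ B', SubArg B' B ∧ Defeasible T B' ∧ A.conc = neg B'.conc

/-- dlp-rebut: `A` dlp-rebuts `B` iff for some subargument `B'` of `B`
the set `{Conc A, Conc B'} ∪ K` is indirectly inconsistent. -/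
def dlpRebuts {α : Type} (T : Theory α) (A B : Arg α) : Prop :=
  ∃ B', SubArg B' B ∧ ¬ IndCons T ({A.conc, B'.conc} ∪ T.K)

/-- Defeat under dlp-rebut with the simple argument ordering
(`A ≺ B` iff `A` is defeasible and `B` is strict): `A` defeats `B` iff `A`
dlp-rebuts `B` on some subargument `B'` and not `A ≺ B'`. -/
def dlpDefeats {α : Type} (T : Theory α) (A B : Arg α) : Prop :=
  ∃ B', SubArg B' B ∧ ¬ IndCons T ({A.conc, B'.conc} ∪ T.K) ∧
    ¬ (Defeasible T A ∧ ¬ Defeasible T B')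

/-- with dlp-rebut as attack, `K` indirectly consistent and the
simple argument ordering, the grounded extension is directly consistent. -/
theorem grounded_directly_consistent {α : Type} (T : Theory α)
    (hK : IndCons T T.K)
    (E : Set {A : Arg α // WF T A})
    (hfix : Fop (fun A B => dlpDefeats T A.1 B.1) E = E)
    (hleast : ∀ S, Fop (fun A B => dlpDefeats T A.1 B.1) S = S → E ⊆ S) :
    ¬ ∃ φ : Lit α, (∃ A ∈ E, (A : {A : Arg α // WF T A}).1.conc = φ) ∧
      (∃ B ∈ E, (B : {A : Arg α // WF T A}).1.conc = neg φ) := by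
  rintro ⟨φ, ⟨A, hA, hAc⟩, ⟨B, hB, hBc⟩⟩
  classical
  set att : {A : Arg α // WF T A} → {A : Arg α // WF T A} → Prop :=
    fun A B => dlpDefeats T A.1 B.1 with hatt
  let F : Set {A : Arg α // WF T A} →o Set {A : Arg α // WF T A} :=
    ⟨Fop att, by
      intro S S' hSS a ha b hb
      obtain ⟨c, hc, hcb⟩ := ha b hb
      exact ⟨c, hSS hc, hcb⟩⟩
  have hEfix : F E = E := hfix
  have hE_lfp : E = OrderHom.lfp F :=
    le_antisymm (hleast _ (OrderHom.map_lfp F)) (OrderHom.lfp_le F hEfix.le)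
  -- conflict-freeness of the least fixpoint
  have hcf : ∀ a ∈ E, ∀ b ∈ E, ¬ att b a := by
    let P : Set {A : Arg α // WF T A} :=
      {a | a ∈ OrderHom.lfp F ∧ ¬ ∃ b ∈ OrderHom.lfp F, att b a}
    have hPsub : P ⊆ OrderHom.lfp F := fun x hx => hx.1
    have hpre : F P ≤ P := by
      intro a ha
      refine ⟨?_, ?_⟩
      · have h1 : F P ≤ F (OrderHom.lfp F) := F.monotone hPsub
        have h2 := h1 ha
        rwa [OrderHom.map_lfp] at h2
      · rintro ⟨b, hb, hba⟩
        obtain ⟨c, hcP, hcb⟩ := ha b hba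
        have hb' : b ∈ F (OrderHom.lfp F) := by rw [OrderHom.map_lfp]; exact hb
        obtain ⟨d, hd, hdc⟩ := hb' c hcb
        exact hcP.2 ⟨d, hd, hdc⟩
    have hsub : OrderHom.lfp F ≤ P := OrderHom.lfp_le F hpre
    intro a ha b hb hba
    have haP : a ∈ P := hsub (hE_lfp ▸ ha)
    exact haP.2 ⟨b, hE_lfp ▸ hb, hba⟩
  -- the pair {Conc A, Conc B} ∪ K is indirectly inconsistent (both ways)
  have hinc1 : ¬ IndCons T ({A.1.conc, B.1.conc} ∪ T.K) := by
    intro h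
    refine h ⟨φ, Cl.base ?_, Cl.base ?_⟩
    · exact Set.mem_union_left _ (hAc ▸ Set.mem_insert _ _)
    · exact Set.mem_union_left _ (hBc ▸ Set.mem_insert_of_mem _ rfl)
  have hinc2 : ¬ IndCons T ({B.1.conc, A.1.conc} ∪ T.K) := by
    intro h
    refine h ⟨φ, Cl.base ?_, Cl.base ?_⟩
    · exact Set.mem_union_left _ (hAc ▸ Set.mem_insert_of_mem _ rfl)
    · exact Set.mem_union_left _ (hBc ▸ Set.mem_insert _ _)
  by_cases h : Defeasible T A.1 ∧ ¬ Defeasible T B.1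
  · -- B defeats A
    exact hcf A hA B hB ⟨A.1, SubArg.refl _, hinc2, fun hc => h.2 hc.1⟩
  · -- A defeats B
    exact hcf B hB A hA ⟨B.1, SubArg.refl _, hinc1, h⟩
end

section
/- In DeLP, no literal having a strict derivation from Π has a counterargument: if L is strictly derivable from Π, then there is no DeLP argument ⟨B, Q⟩ such that Q and L disagree relative to Π. -/
/-- A defeasible logic program `(Π, Δ)`: facts and strict rules (`Π`)
and defeasible rules, including presumptions (`Δ`). -/
structure Program (α : Type) where
  facts : Set (Lit α)
  strict : Set (Rule α)
  defeasible : Set (Rule α)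

/-- Defeasible derivability of a literal from `Π ∪ R`. -/
def Derives {α : Type} (P : Program α) (R : Set (Rule α)) (l : Lit α) : Prop :=
  Cl (P.strict ∪ R) P.facts l

/-- `Π ∪ R` is contradictory: a complementary pair is defeasibly derivable. -/
def Contradictory {α : Type} (P : Program α) (R : Set (Rule α)) : Prop :=
  ∃ h, Derives P R h ∧ Derives P R (neg h)

/-- `⟨R, p⟩` is a DeLP argument: `R ⊆ Δ`, `p` is defeasibly derivable from
`Π ∪ R`, `Π ∪ R` is non-contradictory, and `R` is ⊆-minimal with these properties. -/
def DeLPArg {α : Type} (P : Program α) (R : Set (Rule α)) (p : Lit α) : Prop :=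
  R ⊆ P.defeasible ∧ Derives P R p ∧ ¬ Contradictory P R ∧
    ∀ R' : Set (Rule α), R' ⊂ R → ¬ (Derives P R' p ∧ ¬ Contradictory P R')

/-- The ASPIC+ argumentation theory corresponding to a defeasible logic program. -/
def theoryOf {α : Type} (P : Program α) : Theory α :=
  ⟨P.facts, P.strict, P.defeasible⟩

/-- Literals `l` and `q` disagree relative to `Π`: from `Π ∪ {l, q}` a
complementary pair is strictly derivable. -/
def Disagree {α : Type} (P : Program α) (l q : Lit α) : Prop :=
  ∃ h, Cl P.strict (P.facts ∪ {l, q}) h ∧ Cl P.strict (P.facts ∪ {l, q}) (neg h)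

/-- `Π` is non-contradictory: no complementary pair is strictly derivable. -/
def NonContradictory {α : Type} (P : Program α) : Prop :=
  ¬ ∃ h, Cl P.strict P.facts h ∧ Cl P.strict P.facts (neg h)

lemma Cl.mono_cut {α : Type} {R R' : Set (Rule α)} {S S' : Set (Lit α)} {l : Lit α}
    (h : Cl R S l) (hR : R ⊆ R') (hS : ∀ s ∈ S, Cl R' S' s) : Cl R' S' l := by
  induction h with
  | base hl => exact hS _ hl
  | step hr _ ih => exact Cl.step (hR hr) ih

/-- no literal strictly derivable from `Π` has a
counterargument: no DeLP argument concludes a literal disagreeing with it. -/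
theorem strict_derivation_no_counterargument {α : Type} (P : Program α)
    (hnc : NonContradictory P) (L : Lit α)
    (hL : Cl P.strict P.facts L) :
    ¬ ∃ (B : Set (Rule α)) (Q : Lit α), DeLPArg P B Q ∧ Disagree P L Q := by
  rintro ⟨B, Q, ⟨_, hQ, hNC, _⟩, h, h1, h2⟩
  apply hNC
  have hbase : ∀ s ∈ P.facts ∪ {L, Q}, Cl (P.strict ∪ B) P.facts s := by
    rintro s (hs | hs | hs)
    · exact Cl.base hs
    · subst hs; exact hL.mono_cut (Set.subset_union_left) (fun _ h => Cl.base h)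
    · simp only [Set.mem_singleton_iff] at hs; subst hs; exact hQ
  exact ⟨h, h1.mono_cut Set.subset_union_left hbase,
    h2.mono_cut Set.subset_union_left hbase⟩
end

section
/- In any abstract argumentation framework, the grounded extension is a complete extension. -/
/-- A complete extension: conflict-free and equal to the set of arguments it defends. -/
def complete {A : Type*} (att : A → A → Prop) (E : Set A) : Prop :=
  conflictFree att E ∧ Fop att E = E

/-- The grounded extension is a complete extension. -/
theorem grounded_complete {A : Type*} (att : A → A → Prop) (E : Set A)
    (hfix : Fop att E = E) (hleast : ∀ S, Fop att S = S → E ⊆ S) :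
    complete att E := by
  refine ⟨?_, hfix⟩
  -- monotone operator
  have hmono : Monotone (Fop att) := by
    intro S T hST a ha b hb
    obtain ⟨c, hc, hcb⟩ := ha b hb
    exact ⟨c, hST hc, hcb⟩
  set f : Set A →o Set A := ⟨Fop att, hmono⟩ with hf
  set D : Set A := {a | a ∈ E ∧ ∀ b ∈ E, ¬ att b a} with hD
  have hDsub : D ⊆ E := fun a ha => ha.1
  have hpre : Fop att D ⊆ D := by
    intro a ha
    have haE : a ∈ E := by
      rw [← hfix]
      exact fun b hb => by
        obtain ⟨c, hc, hcb⟩ := ha b hb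
        exact ⟨c, hDsub hc, hcb⟩
    refine ⟨haE, fun b hbE hba => ?_⟩
    obtain ⟨c, hcD, hcb⟩ := ha b hba
    -- b ∈ E = F(E), so b is defended by E against its attacker c
    have hbF : b ∈ Fop att E := by rw [hfix]; exact hbE
    obtain ⟨d, hdE, hdc⟩ := hbF c hcb
    exact hcD.2 d hdE hdc
  have hlfp : Fop att (OrderHom.lfp f) = OrderHom.lfp f := f.map_lfp
  have hEsub : E ⊆ D :=
    (hleast _ hlfp).trans (OrderHom.lfp_le f hpre)
  intro a haE b hbE hab
  exact (hEsub hbE).2 a haE hab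
end
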